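/- The number of Farey points of level Q in dimension n, i.e. #{p/q ∈ ℝ^n/ℤ^n : (p,q) ∈ ℤ^{n+1} primitive, 1 ≤ q ≤ Q}, is asymptotic to Q^{n+1}/((n+1)ζ(n+1)) as Q → ∞; equivalently, the number of primitive vectors (p,q) ∈ ℤ^{n+1} with 0 ≤ p_i < q for all i and 1 ≤ q ≤ Q is asymptotic to Q^{n+1}/((n+1)ζ(n+1)). -/

import Mathlib

open Matrix

noncomputable section

abbrev SL (m : ℕ) (R : Type) [CommRing R] := Matrix.SpecialLinearGroup (Fin m) R

def lastVec (n : ℕ) (R : Type) [CommRing R] : Fin (n+1) → R := Pi.single (Fin.last n) 1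

def Primitive {n : ℕ} (a : Fin (n+1) → ℤ) : Prop := Finset.univ.gcd a = 1

/-- The stabilizer of the row vector (0,...,0,1) under right multiplication. -/
def stab (n : ℕ) (R : Type) [CommRing R] : Subgroup (SL (n+1) R) where
  carrier := {γ | Matrix.vecMul (lastVec n R) (γ : Matrix (Fin (n+1)) (Fin (n+1)) R) = lastVec n R}
  one_mem' := by simp
  mul_mem' := by
    intro a b ha hb
    simp only [Set.mem_setOf_eq] at *
    rw [Matrix.SpecialLinearGroup.coe_mul, ← Matrix.vecMul_vecMul, ha, hb]
  inv_mem' := by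
    intro a ha
    simp only [Set.mem_setOf_eq] at *
    conv_lhs => rw [← ha]
    rw [Matrix.vecMul_vecMul, ← Matrix.SpecialLinearGroup.coe_mul, mul_inv_cancel,
      Matrix.SpecialLinearGroup.coe_one, Matrix.vecMul_one]

/-- The diagonal matrix a(y) = diag(y^{1/n} I_n, y⁻¹). -/
def aMat (n : ℕ) (y : ℝ) : Matrix (Fin (n+1)) (Fin (n+1)) ℝ :=
  Matrix.diagonal (fun i => if i = Fin.last n then y⁻¹ else y ^ ((n : ℝ)⁻¹))

/-- The unipotent matrix h(x), with bottom-left row −x. -/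
def hMat {n : ℕ} (x : Fin n → ℝ) : Matrix (Fin (n+1)) (Fin (n+1)) ℝ :=
  fun i j => if i = j then 1 else
    if i = Fin.last n then (if hj : j = Fin.last n then 0 else -x (j.castPred hj)) else 0

/-- The unipotent integer matrix u(x). -/
def uMat {n : ℕ} (x : Fin n → ℤ) : Matrix (Fin (n+1)) (Fin (n+1)) ℤ :=
  fun i j => if i = j then 1 else
    if i = Fin.last n then (if hj : j = Fin.last n then 0 else x (j.castPred hj)) else 0

/-- The Euclidean norm on ℝ^n. -/
def enorm {n : ℕ} (v : Fin n → ℝ) : ℝ := Real.sqrt (∑ i, (v i)^2)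

abbrev mapSL (n : ℕ) : SL (n+1) ℤ →* SL (n+1) ℝ :=
  Matrix.SpecialLinearGroup.map (Int.castRingHom ℝ)

instance (m : ℕ) : TopologicalSpace (SL m ℝ) :=
  TopologicalSpace.induced (fun A => (A : Matrix (Fin m) (Fin m) ℝ)) inferInstance

namespace FareyAux
open Finset ArithmeticFunction Filter
open scoped ArithmeticFunction.Moebius ArithmeticFunction.zeta

def S (n M : ℕ) : ℕ := ∑ m ∈ Finset.Icc 1 M, m ^ n

def J (n q : ℕ) : ℕ :=
  ((Fintype.piFinset fun _ : Fin n => Finset.range q).filter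
    fun p => Finset.univ.gcd (Fin.snoc p q : Fin (n+1) → ℕ) = 1).card

lemma gcd_natCast {α : Type*} (s : Finset α) (f : α → ℕ) :
    s.gcd (fun i => (f i : ℤ)) = ((s.gcd f : ℕ) : ℤ) := by
  classical
  induction s using Finset.induction_on with
  | empty => simp
  | insert _ _ h ih =>
    rw [Finset.gcd_insert, Finset.gcd_insert, ih, ← Int.coe_gcd, Int.gcd_natCast_natCast]
    rfl

lemma moebius_divisor_sum (m : ℕ) :
    ∑ d ∈ m.divisors, μ d = if m = 1 then 1 else 0 := by
  have h := congrArg (fun f => f m) ArithmeticFunction.moebius_mul_coe_zeta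
  simp only [ArithmeticFunction.coe_mul_zeta_apply, ArithmeticFunction.one_apply] at h
  exact h

lemma pow_ineq_lower (m n : ℕ) : m^(n+1) + (n+1) * m^n ≤ (m+1)^(n+1) := by
  induction n with
  | zero => simp [pow_succ]
  | succ n ih =>
    have h2 : (m^(n+1) + (n+1) * m^n) * (m+1) ≤ (m+1)^(n+1) * (m+1) :=
      Nat.mul_le_mul_right _ ih
    have h3 : (m^(n+1) + (n+1) * m^n) * (m+1)
        = m^(n+2) + (n+2) * m^(n+1) + (n+1) * m^n := by ring
    calc m^(n+2) + (n+2) * m^(n+1)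
        ≤ (m^(n+1) + (n+1) * m^n) * (m+1) := by rw [h3]; exact Nat.le_add_right _ _
    _ ≤ (m+1)^(n+1) * (m+1) := h2
    _ = (m+1)^(n+2) := by ring

lemma pow_ineq_upper (m n : ℕ) : (m+1)^(n+1) ≤ m^(n+1) + (n+1) * (m+1)^n := by
  induction n with
  | zero => simp [pow_succ]
  | succ n ih =>
    have h2 : (m+1)^(n+1) * (m+1) ≤ (m^(n+1) + (n+1) * (m+1)^n) * (m+1) :=
      Nat.mul_le_mul_right _ ih
    have h3 : (m^(n+1) + (n+1) * (m+1)^n) * (m+1)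
        = m^(n+2) + m^(n+1) + (n+1) * (m+1)^(n+1) := by ring
    have h4 : m^(n+1) ≤ (m+1)^(n+1) := Nat.pow_le_pow_left (Nat.le_succ m) _
    calc (m+1)^(n+2) = (m+1)^(n+1) * (m+1) := by ring
    _ ≤ (m^(n+1) + (n+1) * (m+1)^n) * (m+1) := h2
    _ = m^(n+2) + m^(n+1) + (n+1) * (m+1)^(n+1) := h3
    _ ≤ m^(n+2) + (n+2) * (m+1)^(n+1) := by nlinarith


lemma filter_range_dvd (d q : ℕ) (hd : 0 < d) (hdq : d ∣ q) :
    ((Finset.range q).filter (d ∣ ·)).card = q / d := by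
  classical
  have himg : (Finset.range q).filter (d ∣ ·) = (Finset.range (q / d)).image (d * ·) := by
    ext x
    simp only [mem_filter, mem_range, mem_image]
    constructor
    · rintro ⟨hx, m, rfl⟩
      exact ⟨m, (Nat.lt_div_iff_mul_lt' hdq m).mpr hx, rfl⟩
    · rintro ⟨m, hm, rfl⟩
      exact ⟨(Nat.lt_div_iff_mul_lt' hdq m).mp hm, Dvd.intro m rfl⟩
  rw [himg, Finset.card_image_of_injective _ (fun a b h => by
    exact Nat.eq_of_mul_eq_mul_left hd h), Finset.card_range]

lemma pi_count (n d q : ℕ) (hd : 0 < d) (hdq : d ∣ q) :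
    ((Fintype.piFinset fun _ : Fin n => Finset.range q).filter
      fun p => ∀ i, d ∣ p i).card = (q / d) ^ n := by
  classical
  have : ((Fintype.piFinset fun _ : Fin n => Finset.range q).filter fun p => ∀ i, d ∣ p i)
      = Fintype.piFinset fun _ : Fin n => (Finset.range q).filter (d ∣ ·) := by
    ext p
    simp only [mem_filter, Fintype.mem_piFinset]
    exact ⟨fun h i => ⟨h.1 i, h.2 i⟩, fun h => ⟨fun i => (h i).1, fun i => (h i).2⟩⟩
  rw [this, Fintype.card_piFinset]
  simp [filter_range_dvd d q hd hdq]

lemma sum_over_multiples (n d Q : ℕ) (hd : 0 < d) :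
    ∑ q ∈ (Finset.Icc 1 Q).filter (d ∣ ·), (q / d) ^ n = S n (Q / d) := by
  classical
  have himg : (Finset.Icc 1 Q).filter (d ∣ ·) = (Finset.Icc 1 (Q / d)).image (d * ·) := by
    ext x
    simp only [mem_filter, mem_Icc, mem_image]
    constructor
    · rintro ⟨⟨h1, h2⟩, m, rfl⟩
      refine ⟨m, ⟨by nlinarith, ?_⟩, rfl⟩
      rw [Nat.le_div_iff_mul_le hd, mul_comm]; exact h2
    · rintro ⟨m, ⟨hm1, hm2⟩, rfl⟩
      rw [Nat.le_div_iff_mul_le hd] at hm2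
      refine ⟨⟨by nlinarith, by rw [mul_comm] at hm2; exact hm2⟩, Dvd.intro _ rfl⟩
  rw [himg, Finset.sum_image (fun a _ b _ h => by exact Nat.eq_of_mul_eq_mul_left hd h)]
  unfold S
  apply Finset.sum_congr rfl
  intro m hm
  rw [Nat.mul_div_cancel_left m hd]


lemma S_succ (n M : ℕ) : S n (M+1) = S n M + (M+1)^n := by
  unfold S
  rw [← Finset.Ico_add_one_right_eq_Icc, Finset.sum_Ico_succ_top (by omega), Finset.Ico_add_one_right_eq_Icc]

lemma S_lower (n M : ℕ) : M^(n+1) ≤ (n+1) * S n M := by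
  induction M with
  | zero => simp
  | succ M ih =>
    rw [S_succ, Nat.mul_add]
    calc (M+1)^(n+1) ≤ M^(n+1) + (n+1) * (M+1)^n := pow_ineq_upper M n
    _ ≤ (n+1) * S n M + (n+1) * (M+1)^n := by omega

lemma S_upper (n M : ℕ) : (n+1) * S n M + 1 ≤ (M+1)^(n+1) := by
  induction M with
  | zero => simp [S]
  | succ M ih =>
    rw [S_succ, Nat.mul_add]
    have := pow_ineq_lower (M+1) n
    omega

lemma harmonic_le (Q : ℕ) : ∑ d ∈ Finset.Icc 1 Q, (1:ℝ)/d ≤ 2 * Real.sqrt Q := by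
  induction Q with
  | zero => simp
  | succ Q ih =>
    rw [← Finset.Ico_add_one_right_eq_Icc, Finset.sum_Ico_succ_top (by omega), Finset.Ico_add_one_right_eq_Icc]
    have hkey : (1:ℝ)/(Q+1) ≤ 2 * Real.sqrt (Q+1) - 2 * Real.sqrt Q := by
      have h1 : Real.sqrt ((Q:ℝ)+1) * Real.sqrt ((Q:ℝ)+1) = (Q:ℝ)+1 :=
        Real.mul_self_sqrt (by positivity)
      have h2 : Real.sqrt (Q:ℝ) * Real.sqrt (Q:ℝ) = (Q:ℝ) :=
        Real.mul_self_sqrt (by positivity)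
      have h3 : Real.sqrt (Q:ℝ) ≤ Real.sqrt ((Q:ℝ)+1) := Real.sqrt_le_sqrt (by linarith)
      have h4 : Real.sqrt ((Q:ℝ)+1) ≤ (Q:ℝ)+1 := by
        have := Real.sqrt_le_sqrt (by nlinarith : (Q:ℝ)+1 ≤ ((Q:ℝ)+1)*((Q:ℝ)+1))
        rwa [Real.sqrt_mul_self (by positivity : (0:ℝ) ≤ (Q:ℝ)+1)] at this
      have huv : (Real.sqrt ((Q:ℝ)+1) - Real.sqrt (Q:ℝ))
          * (Real.sqrt ((Q:ℝ)+1) + Real.sqrt (Q:ℝ)) = 1 := by nlinarith [h1, h2]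
      have h6 : 0 ≤ Real.sqrt ((Q:ℝ)+1) - Real.sqrt (Q:ℝ) := by linarith
      have hsum : Real.sqrt ((Q:ℝ)+1) + Real.sqrt (Q:ℝ) ≤ 2*((Q:ℝ)+1) := by linarith
      have h7 := mul_le_mul_of_nonneg_left hsum h6
      rw [div_le_iff₀ (by positivity : (0:ℝ) < (Q:ℝ)+1)]
      nlinarith [h7, huv]
    have hc : ((Q+1:ℕ):ℝ) = (Q:ℝ)+1 := by push_cast; ring
    rw [hc]
    push_cast
    linarith


lemma divisors_gcd_eq (n Q q : ℕ) (hq : q ∈ Finset.Icc 1 Q) (p : Fin n → ℕ) :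
    (Finset.univ.gcd (Fin.snoc p q : Fin (n+1) → ℕ)).divisors
      = (Finset.Icc 1 Q).filter (fun d => d ∣ q ∧ ∀ i, d ∣ p i) := by
  classical
  rw [Finset.mem_Icc] at hq
  ext d
  rw [Nat.mem_divisors, Finset.mem_filter, Finset.mem_Icc]
  have hdvd : d ∣ Finset.univ.gcd (Fin.snoc p q : Fin (n+1) → ℕ)
      ↔ (d ∣ q ∧ ∀ i, d ∣ p i) := by
    rw [Finset.dvd_gcd_iff]
    constructor
    · intro h
      refine ⟨by simpa using h (Fin.last n) (Finset.mem_univ _), fun i => by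
        simpa using h i.castSucc (Finset.mem_univ _)⟩
    · rintro ⟨h1, h2⟩ j _
      refine Fin.lastCases ?_ (fun i => ?_) j
      · simpa using h1
      · simpa using h2 i
  have hne : Finset.univ.gcd (Fin.snoc p q : Fin (n+1) → ℕ) ≠ 0 := by
    intro h
    have := Finset.gcd_eq_zero_iff.mp h (Fin.last n) (Finset.mem_univ _)
    simp at this
    omega
  constructor
  · rintro ⟨h, -⟩
    rw [hdvd] at h
    have hd0 : d ≠ 0 := by rintro rfl; have := h.1; simp at this; omega
    exact ⟨⟨by omega, le_trans (Nat.le_of_dvd (by omega) h.1) hq.2⟩, h⟩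
  · rintro ⟨-, h⟩
    exact ⟨hdvd.mpr h, hne⟩

lemma main_count (n Q : ℕ) :
    ((∑ q ∈ Finset.Icc 1 Q, J n q : ℕ) : ℤ)
      = ∑ d ∈ Finset.Icc 1 Q, μ d * (S n (Q / d) : ℤ) := by
  classical
  push_cast
  have step1 : ∀ q ∈ Finset.Icc 1 Q, (J n q : ℤ)
      = ∑ d ∈ Finset.Icc 1 Q, ∑ p ∈ Fintype.piFinset fun _ : Fin n => Finset.range q,
          (if d ∣ q ∧ ∀ i, d ∣ p i then μ d else 0) := by
    intro q hq
    rw [J, Finset.card_filter]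
    push_cast
    rw [Finset.sum_congr rfl fun p (hp : p ∈ _) => by
      rw [← moebius_divisor_sum, divisors_gcd_eq n Q q hq p, Finset.sum_filter]]
    exact Finset.sum_comm
  rw [Finset.sum_congr rfl step1, Finset.sum_comm]
  refine Finset.sum_congr rfl fun d hd => ?_
  rw [Finset.mem_Icc] at hd
  have hd0 : 0 < d := hd.1
  have inner : ∀ q : ℕ, ∑ p ∈ Fintype.piFinset fun _ : Fin n => Finset.range q,
      (if d ∣ q ∧ ∀ i, d ∣ p i then μ d else 0)
      = if d ∣ q then ((q / d : ℕ) : ℤ) ^ n * μ d else 0 := by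
    intro q
    by_cases hdq : d ∣ q
    · simp only [hdq, true_and, if_true]
      rw [← Finset.sum_filter, Finset.sum_const, pi_count n d q hd0 hdq,
        nsmul_eq_mul, Nat.cast_pow]
    · simp [hdq]
  rw [Finset.sum_congr rfl fun q _ => inner q, ← Finset.sum_filter]
  rw [← Finset.sum_mul]
  have := sum_over_multiples n d Q hd0
  have hcast : (∑ q ∈ (Finset.Icc 1 Q).filter (d ∣ ·), ((q / d : ℕ) ^ n : ℤ))
      = ((S n (Q / d) : ℕ) : ℤ) := by
    rw [← this]; push_cast; rfl
  rw [hcast]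
  ring


lemma prim_cast (n : ℕ) (p : Fin n → ℕ) (q : ℕ) :
    Primitive (Fin.snoc (fun j => (p j : ℤ)) (q : ℤ))
      ↔ Finset.univ.gcd (Fin.snoc p q : Fin (n+1) → ℕ) = 1 := by
  have hsnoc : Fin.snoc (fun j => (p j : ℤ)) ((q : ℕ) : ℤ)
      = fun i => (((Fin.snoc p q : Fin (n+1) → ℕ) i : ℕ) : ℤ) := by
    funext i
    refine Fin.lastCases ?_ (fun j => ?_) i <;> simp
  rw [Primitive, hsnoc, gcd_natCast]
  exact Nat.cast_eq_one

lemma ncard_eq (n Q : ℕ) :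
    Set.ncard {pq : (Fin n → ℤ) × ℤ | Primitive (Fin.snoc pq.1 pq.2)
        ∧ (∀ i, 0 ≤ pq.1 i ∧ pq.1 i < pq.2) ∧ 1 ≤ pq.2 ∧ pq.2 ≤ (Q : ℤ)}
      = ∑ q ∈ Finset.Icc 1 Q, J n q := by
  classical
  set F : Finset ((Fin n → ℤ) × ℤ) :=
    ((Fintype.piFinset fun _ : Fin n => Finset.Ico (0:ℤ) (Q:ℤ)) ×ˢ Finset.Icc (1:ℤ) (Q:ℤ)).filter
      (fun pq => Primitive (Fin.snoc pq.1 pq.2) ∧ (∀ i, 0 ≤ pq.1 i ∧ pq.1 i < pq.2)) with hF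
  have hset : {pq : (Fin n → ℤ) × ℤ | Primitive (Fin.snoc pq.1 pq.2)
        ∧ (∀ i, 0 ≤ pq.1 i ∧ pq.1 i < pq.2) ∧ 1 ≤ pq.2 ∧ pq.2 ≤ (Q : ℤ)} = ↑F := by
    ext ⟨p, q⟩
    simp only [hF, Set.mem_setOf_eq, Finset.coe_filter, Finset.mem_product,
      Fintype.mem_piFinset, Finset.mem_Ico, Finset.mem_Icc]
    constructor
    · rintro ⟨h1, h2, h3, h4⟩
      exact ⟨⟨fun i => ⟨(h2 i).1, lt_of_lt_of_le (h2 i).2 h4⟩, h3, h4⟩, h1, h2⟩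
    · rintro ⟨⟨-, h3, h4⟩, h1, h2⟩
      exact ⟨h1, h2, h3, h4⟩
  rw [hset, Set.ncard_coe_finset]
  simp only [J]
  rw [← Finset.card_sigma ((Finset.Icc 1 Q)) (fun q => (Fintype.piFinset
      fun _ : Fin n => Finset.range q).filter
      fun p => Finset.univ.gcd (Fin.snoc p q : Fin (n+1) → ℕ) = 1)]
  apply Finset.card_bij'
    (i := fun pq _ => (⟨pq.2.toNat, fun j => (pq.1 j).toNat⟩ : (_ : ℕ) × (Fin n → ℕ)))
    (j := fun x _ => ((fun j => ((x.2 j : ℕ) : ℤ)), ((x.1 : ℕ) : ℤ)))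
  · -- hi : maps into sigma finset
    rintro ⟨p, q⟩ hpq
    simp only [hF, Finset.mem_filter, Finset.mem_product, Fintype.mem_piFinset,
      Finset.mem_Ico, Finset.mem_Icc] at hpq
    obtain ⟨⟨hp, hq1, hq2⟩, hprim, hbound⟩ := hpq
    have hq0 : (0:ℤ) < q := by omega
    simp only [Finset.mem_sigma, Finset.mem_Icc, Finset.mem_filter, Fintype.mem_piFinset,
      Finset.mem_range]
    refine ⟨⟨by omega, by omega⟩, fun i => ?_, ?_⟩
    · exact (Int.toNat_lt_toNat hq0).mpr (hbound i).2
    · rw [← prim_cast]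
      have hp' : (fun j => (((p j).toNat : ℕ) : ℤ)) = p := by
        funext j; exact Int.toNat_of_nonneg (hbound j).1
      have hq' : ((q.toNat : ℕ) : ℤ) = q := Int.toNat_of_nonneg (by omega)
      rw [hp', hq']
      exact hprim
  · -- hj
    rintro ⟨q, p⟩ hx
    simp only [Finset.mem_sigma, Finset.mem_Icc, Finset.mem_filter, Fintype.mem_piFinset,
      Finset.mem_range] at hx
    obtain ⟨⟨hq1, hq2⟩, hp, hgcd⟩ := hx
    simp only [hF, Finset.mem_filter, Finset.mem_product, Fintype.mem_piFinset,
      Finset.mem_Ico, Finset.mem_Icc]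
    refine ⟨⟨fun i => ⟨by positivity, ?_⟩, by exact_mod_cast hq1, by exact_mod_cast hq2⟩,
      (prim_cast n p q).mpr hgcd, fun i => ⟨by positivity, by exact_mod_cast hp i⟩⟩
    calc ((p i : ℕ) : ℤ) < (q : ℤ) := by exact_mod_cast hp i
    _ ≤ (Q : ℤ) := by exact_mod_cast hq2
  · -- left inverse
    rintro ⟨p, q⟩ hpq
    simp only [hF, Finset.mem_filter, Finset.mem_product, Fintype.mem_piFinset,
      Finset.mem_Ico, Finset.mem_Icc] at hpq
    obtain ⟨⟨hp, hq1, hq2⟩, hprim, hbound⟩ := hpq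
    ext j
    · exact Int.toNat_of_nonneg (hbound _).1
    · exact Int.toNat_of_nonneg (by omega)
  · -- right inverse
    rintro ⟨q, p⟩ hx
    simp


lemma summable_pnat_pow (n : ℕ) (hn : 1 ≤ n) :
    Summable (fun k : ℕ => if k = 0 then (0:ℝ) else 1/(k:ℝ)^(n+1)) := by
  have h : Summable (fun k : ℕ => 1/(k:ℝ)^(n+1)) :=
    Real.summable_one_div_nat_pow.mpr (by omega)
  refine h.of_nonneg_of_le (fun k => by positivity) (fun k => ?_)
  by_cases hk : k = 0 <;> simp [hk]

lemma summable_moebius_div (n : ℕ) (hn : 1 ≤ n) :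
    Summable (fun d : ℕ => (μ d : ℝ)/(d:ℝ)^(n+1)) := by
  have h : Summable (fun k : ℕ => 1/(k:ℝ)^(n+1)) :=
    Real.summable_one_div_nat_pow.mpr (by omega)
  apply Summable.of_abs
  refine h.of_nonneg_of_le (fun k => abs_nonneg _) (fun k => ?_)
  rcases eq_or_ne k 0 with rfl | hk
  · simp
  · have h1 : |(μ k : ℝ)| ≤ 1 := by
      have := ArithmeticFunction.abs_moebius_le_one (n := k)
      exact_mod_cast this
    have hkpos : (0:ℝ) < (k:ℝ)^(n+1) := by positivity
    rw [abs_div, _root_.abs_of_nonneg hkpos.le]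
    exact div_le_div_of_nonneg_right h1 hkpos.le
  
lemma tsum_moebius_mul_zeta (n : ℕ) (hn : 1 ≤ n) :
    (∑' d : ℕ, (μ d : ℝ)/(d:ℝ)^(n+1)) * (∑' m : ℕ, (1:ℝ)/((m:ℝ)+1)^(n+1)) = 1 := by
  set s : ℂ := ((n:ℂ)+1) with hs_def
  have hs : 1 < s.re := by
    simp only [hs_def, Complex.add_re, Complex.natCast_re, Complex.one_re]
    have h : (1:ℝ) ≤ n := by exact_mod_cast hn
    linarith
  have key := LSeries_zeta_mul_Lseries_moebius hs
  have hcpow : ∀ k : ℕ, (k:ℂ) ^ s = ((k:ℂ))^(n+1) := by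
    intro k
    have : s = ((n+1 : ℕ) : ℂ) := by push_cast [hs_def]; ring
    rw [this, Complex.cpow_natCast]
  have hzeta : LSeries (fun k => ((ζ k : ℕ) : ℂ)) s
      = ((∑' m : ℕ, (1:ℝ)/((m:ℝ)+1)^(n+1) : ℝ) : ℂ) := by
    have hterm : ∀ k, LSeries.term (fun k => ((ζ k : ℕ) : ℂ)) s k
        = ((if k = 0 then (0:ℝ) else 1/(k:ℝ)^(n+1) : ℝ) : ℂ) := by
      intro k
      rcases eq_or_ne k 0 with rfl | hk
      · simp [LSeries.term]
      · rw [LSeries.term_of_ne_zero hk, hcpow, if_neg hk,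
          ArithmeticFunction.zeta_apply_ne hk]
        push_cast
        ring
    rw [LSeries, tsum_congr hterm, ← Complex.ofReal_tsum]
    refine congrArg (fun x : ℝ => (x:ℂ)) ?_
    rw [Summable.tsum_eq_zero_add (summable_pnat_pow n hn)]
    norm_num
  have hmoeb : LSeries (fun k => ((μ k : ℤ) : ℂ)) s
      = ((∑' d : ℕ, (μ d : ℝ)/(d:ℝ)^(n+1) : ℝ) : ℂ) := by
    have hterm : ∀ k, LSeries.term (fun k => ((μ k : ℤ) : ℂ)) s k
        = (((μ k : ℝ)/(k:ℝ)^(n+1) : ℝ) : ℂ) := by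
      intro k
      rcases eq_or_ne k 0 with rfl | hk
      · simp [LSeries.term]
      · rw [LSeries.term_of_ne_zero hk, hcpow]
        push_cast
        ring
    rw [LSeries, tsum_congr hterm, ← Complex.ofReal_tsum]
  rw [hzeta, hmoeb] at key
  rw [mul_comm]
  exact_mod_cast key


lemma term_bound (n d Q : ℕ) (hn : 1 ≤ n) (hd : 1 ≤ d) (hdQ : d ≤ Q) :
    |((n:ℝ)+1) * (S n (Q/d) : ℕ) - (Q:ℝ)^(n+1)/(d:ℝ)^(n+1)|
      ≤ ((n:ℝ)+1) * 2^n * (Q:ℝ)^n / d := by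
  set M : ℕ := Q / d with hM
  set r : ℝ := (Q:ℝ)/(d:ℝ) with hr
  have hd0 : (0:ℝ) < d := by exact_mod_cast hd
  have hQ0 : (0:ℝ) ≤ Q := Nat.cast_nonneg Q
  -- M ≤ r < M + 1
  have hMr : (M:ℝ) ≤ r := by
    rw [hr, le_div_iff₀ hd0]
    exact_mod_cast Nat.div_mul_le_self Q d
  have hrM : r < (M:ℝ) + 1 := by
    rw [hr, div_lt_iff₀ hd0]
    have h1 := Nat.div_add_mod Q d
    have h2 := Nat.mod_lt Q (show 0 < d by omega)
    push_cast
    nlinarith [h1, h2, (by exact_mod_cast h1 : (d:ℝ) * (M:ℝ) + ((Q % d : ℕ):ℝ) = (Q:ℝ)),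
      (by exact_mod_cast h2 : ((Q % d : ℕ):ℝ) < (d:ℝ))]
  have hr1 : (1:ℝ) ≤ r := by
    rw [hr, le_div_iff₀ hd0]
    simpa using (by exact_mod_cast hdQ : (d:ℝ) ≤ (Q:ℝ))
  have hM0 : (0:ℝ) ≤ M := Nat.cast_nonneg M
  have hr0 : (0:ℝ) ≤ r := by linarith
  -- bounds for (n+1) S
  have hS1 : (M:ℝ)^(n+1) ≤ ((n:ℝ)+1) * (S n M : ℕ) := by
    have := S_lower n M
    have h := (by exact_mod_cast this : ((M^(n+1) : ℕ):ℝ) ≤ (((n+1) * S n M : ℕ):ℝ))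
    push_cast at h
    linarith
  have hS2 : ((n:ℝ)+1) * (S n M : ℕ) ≤ ((M:ℝ)+1)^(n+1) := by
    have := S_upper n M
    have h := (by exact_mod_cast this : (((n+1) * S n M + 1 : ℕ):ℝ) ≤ (((M+1)^(n+1) : ℕ):ℝ))
    push_cast at h
    linarith
  -- r^(n+1) in same interval
  have hrpow1 : (M:ℝ)^(n+1) ≤ r^(n+1) := pow_le_pow_left₀ hM0 hMr _
  have hrpow2 : r^(n+1) ≤ ((M:ℝ)+1)^(n+1) := pow_le_pow_left₀ hr0 hrM.le _
  -- interval width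
  have hwidth : ((M:ℝ)+1)^(n+1) - (M:ℝ)^(n+1) ≤ ((n:ℝ)+1) * ((M:ℝ)+1)^n := by
    have := pow_ineq_upper M n
    have h := (by exact_mod_cast this : (((M+1)^(n+1) : ℕ):ℝ) ≤ ((M^(n+1) + (n+1)*(M+1)^n : ℕ):ℝ))
    push_cast at h
    linarith
  -- (M+1) ≤ 2r
  have hM2r : (M:ℝ)+1 ≤ 2*r := by linarith
  have hMn : ((M:ℝ)+1)^n ≤ (2*r)^n := pow_le_pow_left₀ (by linarith) hM2r n
  -- r^n ≤ Q^n / d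
  have hrn : r^n ≤ (Q:ℝ)^n / d := by
    rw [hr, div_pow]
    exact div_le_div_of_nonneg_left (by positivity) hd0
      (le_self_pow₀ (by exact_mod_cast hd) (by omega))
  have hreq : (Q:ℝ)^(n+1)/(d:ℝ)^(n+1) = r^(n+1) := by rw [hr, div_pow]
  rw [hreq]
  have hdiff : |((n:ℝ)+1) * (S n M : ℕ) - r^(n+1)| ≤ ((n:ℝ)+1)*(((M:ℝ)+1)^n) :=
    abs_le.mpr ⟨by linarith, by linarith⟩
  calc |((n:ℝ)+1) * (S n M : ℕ) - r^(n+1)| ≤ ((n:ℝ)+1)*(((M:ℝ)+1)^n) := hdiff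
  _ ≤ ((n:ℝ)+1)*((2*r)^n) := mul_le_mul_of_nonneg_left hMn (by positivity)
  _ = ((n:ℝ)+1)*2^n*r^n := by rw [mul_pow]; ring
  _ ≤ ((n:ℝ)+1)*2^n*((Q:ℝ)^n/d) := mul_le_mul_of_nonneg_left hrn (by positivity)
  _ = ((n:ℝ)+1)*2^n*(Q:ℝ)^n/d := by ring


lemma main_estimate (n Q : ℕ) (hn : 1 ≤ n) (hQ : 1 ≤ Q) :
    |((∑ q ∈ Finset.Icc 1 Q, J n q : ℕ) : ℝ)/(Q:ℝ)^(n+1)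
        - (∑ d ∈ Finset.Icc 1 Q, (μ d : ℝ)/(d:ℝ)^(n+1))/((n:ℝ)+1)|
      ≤ 2^(n+1) / Real.sqrt Q := by
  set A : ℝ := ((∑ q ∈ Finset.Icc 1 Q, J n q : ℕ) : ℝ) with hA_def
  set pL : ℝ := ∑ d ∈ Finset.Icc 1 Q, (μ d : ℝ)/(d:ℝ)^(n+1) with hpL_def
  have hQ0 : (0:ℝ) < Q := by exact_mod_cast hQ
  have hsq : Real.sqrt Q * Real.sqrt Q = Q := Real.mul_self_sqrt hQ0.le
  have hsqpos : (0:ℝ) < Real.sqrt Q := Real.sqrt_pos.mpr hQ0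
  have hA : A = ∑ d ∈ Finset.Icc 1 Q, (μ d : ℝ) * ((S n (Q/d) : ℕ) : ℝ) := by
    rw [hA_def]
    have := main_count n Q
    have h2 : ((∑ q ∈ Finset.Icc 1 Q, J n q : ℕ) : ℝ)
        = ((∑ d ∈ Finset.Icc 1 Q, μ d * (S n (Q / d) : ℤ) : ℤ) : ℝ) := by exact_mod_cast this
    rw [h2]
    push_cast
    rfl
  have hD : ((n:ℝ)+1) * A - (Q:ℝ)^(n+1) * pL
      = ∑ d ∈ Finset.Icc 1 Q, (μ d : ℝ)
          * (((n:ℝ)+1) * ((S n (Q/d) : ℕ) : ℝ) - (Q:ℝ)^(n+1)/(d:ℝ)^(n+1)) := by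
    rw [hA, hpL_def, Finset.mul_sum, Finset.mul_sum, ← Finset.sum_sub_distrib]
    refine Finset.sum_congr rfl fun d hd => ?_
    ring
  have hDbound : |((n:ℝ)+1) * A - (Q:ℝ)^(n+1) * pL|
      ≤ ((n:ℝ)+1) * 2^n * (Q:ℝ)^n * (2 * Real.sqrt Q) := by
    rw [hD]
    calc |∑ d ∈ Finset.Icc 1 Q, (μ d : ℝ)
          * (((n:ℝ)+1) * ((S n (Q/d) : ℕ) : ℝ) - (Q:ℝ)^(n+1)/(d:ℝ)^(n+1))|
        ≤ ∑ d ∈ Finset.Icc 1 Q, |(μ d : ℝ)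
          * (((n:ℝ)+1) * ((S n (Q/d) : ℕ) : ℝ) - (Q:ℝ)^(n+1)/(d:ℝ)^(n+1))| :=
          Finset.abs_sum_le_sum_abs _ _
    _ ≤ ∑ d ∈ Finset.Icc 1 Q, ((n:ℝ)+1) * 2^n * (Q:ℝ)^n * (1/d) := by
        refine Finset.sum_le_sum fun d hd => ?_
        rw [Finset.mem_Icc] at hd
        rw [abs_mul]
        have h1 : |(μ d : ℝ)| ≤ 1 := by
          have := ArithmeticFunction.abs_moebius_le_one (n := d)
          exact_mod_cast this
        have h2 := term_bound n d Q hn hd.1 hd.2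
        calc |(μ d : ℝ)| * |((n:ℝ)+1) * ((S n (Q/d) : ℕ) : ℝ) - (Q:ℝ)^(n+1)/(d:ℝ)^(n+1)|
            ≤ 1 * (((n:ℝ)+1) * 2^n * (Q:ℝ)^n / d) :=
              mul_le_mul h1 h2 (abs_nonneg _) zero_le_one
        _ = ((n:ℝ)+1) * 2^n * (Q:ℝ)^n * (1/d) := by ring
    _ = ((n:ℝ)+1) * 2^n * (Q:ℝ)^n * ∑ d ∈ Finset.Icc 1 Q, (1:ℝ)/d := by
        rw [Finset.mul_sum]
    _ ≤ ((n:ℝ)+1) * 2^n * (Q:ℝ)^n * (2 * Real.sqrt Q) := by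
        refine mul_le_mul_of_nonneg_left (harmonic_le Q) (by positivity)
  have heq : A/(Q:ℝ)^(n+1) - pL/((n:ℝ)+1)
      = (((n:ℝ)+1) * A - (Q:ℝ)^(n+1) * pL)/(((n:ℝ)+1)*(Q:ℝ)^(n+1)) := by
    field_simp
  rw [heq, abs_div, abs_of_pos (by positivity : (0:ℝ) < ((n:ℝ)+1)*(Q:ℝ)^(n+1)),
    div_le_div_iff₀ (by positivity) hsqpos]
  calc |((n:ℝ)+1) * A - (Q:ℝ)^(n+1) * pL| * Real.sqrt Q
      ≤ (((n:ℝ)+1) * 2^n * (Q:ℝ)^n * (2 * Real.sqrt Q)) * Real.sqrt Q :=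
        mul_le_mul_of_nonneg_right hDbound (Real.sqrt_nonneg _)
  _ = ((n:ℝ)+1) * 2^(n+1) * (Q:ℝ)^n * (Real.sqrt Q * Real.sqrt Q) := by ring
  _ = 2^(n+1) * (((n:ℝ)+1) * (Q:ℝ)^(n+1)) := by rw [hsq, pow_succ]; ring


end FareyAux

open Filter ArithmeticFunction
open scoped ArithmeticFunction.Moebius ArithmeticFunction.zeta

/-- The number of Farey points of level Q in dimension n, i.e. the number of primitive
(p,q) ∈ ℤ^{n+1} with 0 ≤ p_i < q and 1 ≤ q ≤ Q, is asymptotic to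
Q^{n+1}/((n+1)ζ(n+1)) as Q → ∞. -/
theorem stmt18 (n : ℕ) (hn : 1 ≤ n) :
    let Z : ℝ := ∑' m : ℕ, (1 : ℝ) / (m + 1) ^ (n + 1)   -- ζ(n+1)
    let N : ℕ → ℕ := fun Q =>
      Set.ncard {pq : (Fin n → ℤ) × ℤ | Primitive (Fin.snoc pq.1 pq.2)
        ∧ (∀ i, 0 ≤ pq.1 i ∧ pq.1 i < pq.2) ∧ 1 ≤ pq.2 ∧ pq.2 ≤ (Q : ℤ)}
    Filter.Tendsto (fun Q : ℕ => (N Q : ℝ) / ((Q : ℝ) ^ (n + 1) / ((n + 1) * Z)))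
      Filter.atTop (nhds 1) := by
  intro Z N
  have hf : Summable (fun d : ℕ => (μ d : ℝ)/(d:ℝ)^(n+1)) := FareyAux.summable_moebius_div n hn
  set L : ℝ := ∑' d : ℕ, (μ d : ℝ)/(d:ℝ)^(n+1) with hL_def
  have hLZ : L * Z = 1 := FareyAux.tsum_moebius_mul_zeta n hn
  have hZs : Summable (fun m : ℕ => (1:ℝ)/((m:ℝ)+1)^(n+1)) := by
    have h : Summable (fun k : ℕ => 1/(k:ℝ)^(n+1)) :=
      Real.summable_one_div_nat_pow.mpr (by omega)
    have h2 := (summable_nat_add_iff 1).mpr h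
    refine h2.congr fun m => ?_
    push_cast
    ring
  have hZpos : 0 < Z := by
    refine Summable.tsum_pos hZs (fun m => by positivity) 0 (by norm_num)
  have hZN : (0:ℝ) < ((n:ℝ)+1) * Z := by
    have : (0:ℝ) < (n:ℝ)+1 := by positivity
    positivity
  -- partial sums tend to L
  have hpL : Tendsto (fun Q : ℕ => ∑ d ∈ Finset.Icc 1 Q, (μ d : ℝ)/(d:ℝ)^(n+1))
      atTop (nhds L) := by
    have h0 : ∀ Q : ℕ, ∑ d ∈ Finset.Icc 1 Q, (μ d : ℝ)/(d:ℝ)^(n+1)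
        = ∑ d ∈ Finset.range (Q+1), (μ d : ℝ)/(d:ℝ)^(n+1) := by
      intro Q
      have : Finset.range (Q+1) = insert 0 (Finset.Icc 1 Q) := by
        ext x; simp only [Finset.mem_range, Finset.mem_insert, Finset.mem_Icc]; omega
      rw [this, Finset.sum_insert (by simp)]
      simp
    have h1 := hf.hasSum.tendsto_sum_nat
    have h2 := h1.comp (tendsto_add_atTop_nat 1)
    refine Tendsto.congr (fun Q => (h0 Q).symm) h2
  -- N Q = sum of J
  have hN : ∀ Q : ℕ, (N Q : ℝ) = ((∑ q ∈ Finset.Icc 1 Q, FareyAux.J n q : ℕ) : ℝ) := by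
    intro Q
    have := FareyAux.ncard_eq n Q
    simp only [N]
    exact_mod_cast congrArg (Nat.cast : ℕ → ℝ) this
  -- error term tends to 0
  have herr : Tendsto (fun Q : ℕ => (2:ℝ)^(n+1) / Real.sqrt Q) atTop (nhds 0) := by
    apply Tendsto.div_atTop tendsto_const_nhds
    have hs : Tendsto (fun x : ℝ => Real.sqrt x) atTop atTop := by
      have h := tendsto_rpow_atTop (by norm_num : (0:ℝ) < 1/2)
      refine Tendsto.congr' ?_ h
      filter_upwards [eventually_ge_atTop (0:ℝ)] with x hx
      rw [Real.sqrt_eq_rpow]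
    exact hs.comp tendsto_natCast_atTop_atTop
  -- main limit
  have h2 : Tendsto (fun Q : ℕ => (N Q : ℝ)/(Q:ℝ)^(n+1)) atTop (nhds (L/((n:ℝ)+1))) := by
    have hsub : Tendsto (fun Q : ℕ => (N Q : ℝ)/(Q:ℝ)^(n+1)
        - (∑ d ∈ Finset.Icc 1 Q, (μ d : ℝ)/(d:ℝ)^(n+1))/((n:ℝ)+1)) atTop (nhds 0) := by
      refine squeeze_zero_norm' ?_ herr
      filter_upwards [eventually_ge_atTop 1] with Q hQ
      rw [Real.norm_eq_abs, hN Q]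
      exact FareyAux.main_estimate n Q hn hQ
    have := hsub.add (hpL.div_const ((n:ℝ)+1))
    simp only [zero_add] at this
    refine this.congr fun Q => by ring
  -- assemble
  have h3 := h2.mul_const (((n:ℝ)+1) * Z)
  have hlim : L/((n:ℝ)+1) * (((n:ℝ)+1)*Z) = 1 := by
    field_simp
    linear_combination hLZ
  rw [hlim] at h3
  refine Tendsto.congr' ?_ h3
  filter_upwards [eventually_ge_atTop 1] with Q hQ
  have hQp : (0:ℝ) < (Q:ℝ)^(n+1) := by
    have : (0:ℝ) < Q := by exact_mod_cast hQ
    positivity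
  rw [div_div_eq_mul_div, mul_comm ((N Q : ℝ)) (((n:ℝ)+1)*Z)]
  rw [mul_div_assoc]
  ring
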